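/- If (X, >) is a well-founded partial order, then the multiset order induced by (X, >) on finite multisets over X is well-founded. -/

import Mathlib

namespace DershowitzManna

variable {X : Type*} [PartialOrder X]

/-- One step of the multiset order: `m + [x] ≻¹ m + n` whenever `x > y` for all `y ∈ n`. -/
def MGt1 (m n : Multiset X) : Prop :=
  ∃ (m₀ nn : Multiset X) (x : X),
    m = m₀ + {x} ∧ n = m₀ + nn ∧ ∀ y ∈ nn, x > y

/-- The multiset order induced by `(X, >)`: transitive closure of `≻¹`. -/
def MGt (m n : Multiset X) : Prop := Relation.TransGen MGt1 m n

/-- Dershowitz–Manna: if `(X, >)` is well-founded, the induced multiset order is well-founded. -/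
theorem multiset_order_wellFounded
    (hwf : WellFounded ((· < ·) : X → X → Prop)) :
    WellFounded (fun n m : Multiset X => MGt m n) := by
  have hce : WellFounded (Relation.CutExpand ((· < ·) : X → X → Prop)) :=
    hwf.cutExpand
  have htg := hce.transGen
  refine Subrelation.wf (r := Relation.TransGen (Relation.CutExpand ((· < ·) : X → X → Prop)))
    ?_ htg
  intro n m h
  refine Relation.TransGen.mono ?_ _ _ h.swap
  intro a b hab
  obtain ⟨m₀, nn, x, rfl, rfl, hx⟩ := hab
  exact ⟨nn, x, fun y hy => hx y hy, by rw [add_assoc, add_comm nn {x}, ← add_assoc]⟩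

end DershowitzManna
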